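/- The discrete Sierpinski triangle S_△ is 4-connected: for every point (x,y) ∈ S_△ there exists a finite sequence of points of S_△ starting at (0,0) and ending at (x,y) in which consecutive points differ by exactly 1 in exactly one coordinate. (This connectivity is required for S_△, and its scaled version, to be a shape that strictly self-assembles.) -/

import Mathlib

/-- The `i`-th stage of the discrete Sierpinski triangle:
`S_0 = {(0,0)}`, `S_{i+1} = S_i ∪ (S_i + 2^i·V)` with `V = {(1,0),(0,1)}`. -/
def sierpStage : ℕ → Set (ℕ × ℕ)
  | 0 => {(0, 0)}
  | i + 1 => sierpStage i ∪
      {p | ∃ m ∈ sierpStage i, ∃ n ∈ ({(1, 0), (0, 1)} : Set (ℕ × ℕ)), p = m + (2 ^ i) • n}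

/-- The discrete Sierpinski triangle `S_△ = ⋃ i, S_i`. -/
def sierpinski : Set (ℕ × ℕ) := ⋃ i, sierpStage i

/-- Two points of `ℕ × ℕ` are 4-adjacent if they differ by exactly `1` in
exactly one coordinate. -/
def FourAdj (p q : ℕ × ℕ) : Prop :=
  (p.1 = q.1 ∧ (p.2 + 1 = q.2 ∨ q.2 + 1 = p.2)) ∨
  (p.2 = q.2 ∧ (p.1 + 1 = q.1 ∨ q.1 + 1 = p.1))

def Conn (S : Set (ℕ × ℕ)) : ℕ × ℕ → ℕ × ℕ → Prop :=
  Relation.ReflTransGen (fun x y => FourAdj x y ∧ y ∈ S)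

lemma Conn.mono {S T : Set (ℕ × ℕ)} (h : S ⊆ T) {a b} (hc : Conn S a b) : Conn T a b :=
  Relation.ReflTransGen.mono (fun _ _ hr => ⟨hr.1, h hr.2⟩) _ _ hc

lemma fourAdj_add {p q : ℕ × ℕ} (v : ℕ × ℕ) (h : FourAdj p q) : FourAdj (p + v) (q + v) := by
  obtain ⟨p1, p2⟩ := p; obtain ⟨q1, q2⟩ := q; obtain ⟨v1, v2⟩ := v
  simp only [FourAdj, Prod.mk_add_mk] at *
  omega

lemma Conn.translate {S T : Set (ℕ × ℕ)} {a b : ℕ × ℕ} (v : ℕ × ℕ)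
    (hT : ∀ q ∈ S, q + v ∈ T) (hc : Conn S a b) : Conn T (a + v) (b + v) :=
  Relation.ReflTransGen.lift (· + v) (fun _ _ hr => ⟨fourAdj_add v hr.1, hT _ hr.2⟩) _ _ hc

lemma stage_mono (i : ℕ) : sierpStage i ⊆ sierpStage (i + 1) := fun _ h => Or.inl h

lemma row_mem : ∀ i k, k < 2 ^ i → ((k, 0) : ℕ × ℕ) ∈ sierpStage i := by
  intro i
  induction i with
  | zero => intro k hk; interval_cases k; rfl
  | succ i ih =>
    intro k hk
    rcases lt_or_ge k (2 ^ i) with h | h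
    · exact stage_mono i (ih k h)
    · refine Or.inr ⟨(k - 2 ^ i, 0), ih _ (by simp [pow_succ] at hk; omega), (1, 0), by simp, ?_⟩
      simp [Prod.ext_iff]; omega

lemma col_mem : ∀ i k, k < 2 ^ i → ((0, k) : ℕ × ℕ) ∈ sierpStage i := by
  intro i
  induction i with
  | zero => intro k hk; interval_cases k; rfl
  | succ i ih =>
    intro k hk
    rcases lt_or_ge k (2 ^ i) with h | h
    · exact stage_mono i (ih k h)
    · refine Or.inr ⟨(0, k - 2 ^ i), ih _ (by simp [pow_succ] at hk; omega), (0, 1), by simp, ?_⟩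
      simp [Prod.ext_iff]; omega

lemma row_conn (i : ℕ) : ∀ k, k < 2 ^ i → Conn (sierpStage i) (0, 0) (k, 0) := by
  intro k
  induction k with
  | zero => intro _; exact Relation.ReflTransGen.refl
  | succ k ih =>
    intro hk
    exact Relation.ReflTransGen.tail (ih (by omega))
      ⟨Or.inr ⟨rfl, Or.inl rfl⟩, row_mem i _ hk⟩

lemma col_conn (i : ℕ) : ∀ k, k < 2 ^ i → Conn (sierpStage i) (0, 0) (0, k) := by
  intro k
  induction k with
  | zero => intro _; exact Relation.ReflTransGen.refl
  | succ k ih =>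
    intro hk
    exact Relation.ReflTransGen.tail (ih (by omega))
      ⟨Or.inl ⟨rfl, Or.inl rfl⟩, col_mem i _ hk⟩

lemma stage_conn : ∀ i, ∀ p ∈ sierpStage i, Conn (sierpStage i) (0, 0) p := by
  intro i
  induction i with
  | zero => intro p hp; rw [show p = (0,0) from hp]; exact Relation.ReflTransGen.refl
  | succ i ih =>
    intro p hp
    rcases hp with h | ⟨m, hm, n, hn, rfl⟩
    · exact (ih p h).mono (stage_mono i)
    · have hlt : 2 ^ i < 2 ^ (i + 1) := by
        have := Nat.pow_lt_pow_succ (a := 2) one_lt_two (n := i); simpa using this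
      rcases hn with rfl | rfl
      · have hv : (2 ^ i : ℕ) • ((1, 0) : ℕ × ℕ) = (2 ^ i, 0) := by simp
        rw [hv]
        have h1 : Conn (sierpStage (i + 1)) (0, 0) (2 ^ i, 0) := row_conn (i + 1) _ hlt
        have hT : ∀ q ∈ sierpStage i, q + ((2 ^ i : ℕ), 0) ∈ sierpStage (i + 1) :=
          fun q hq => Or.inr ⟨q, hq, (1, 0), by simp, by simp⟩
        have h2 := (ih m hm).translate ((2 ^ i : ℕ), 0) hT
        simp only [Prod.mk_add_mk, Nat.zero_add, Nat.add_zero] at h2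
        exact h1.trans h2
      · try simp only [Set.mem_singleton_iff] at *
        have hv : (2 ^ i : ℕ) • ((0, 1) : ℕ × ℕ) = (0, 2 ^ i) := by simp
        rw [hv]
        have h1 : Conn (sierpStage (i + 1)) (0, 0) (0, 2 ^ i) := col_conn (i + 1) _ hlt
        have hT : ∀ q ∈ sierpStage i, q + (0, (2 ^ i : ℕ)) ∈ sierpStage (i + 1) :=
          fun q hq => Or.inr ⟨q, hq, (0, 1), by simp, by simp⟩
        have h2 := (ih m hm).translate (0, (2 ^ i : ℕ)) hT
        simp only [Prod.mk_add_mk, Nat.zero_add, Nat.add_zero] at h2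
        exact h1.trans h2

lemma chain_mem {S : Set (ℕ × ℕ)} : ∀ {a : ℕ × ℕ} {l : List (ℕ × ℕ)},
    List.Chain (fun x y => FourAdj x y ∧ y ∈ S) a l → ∀ q ∈ l, q ∈ S := by
  intro a l
  induction l generalizing a with
  | nil => intro _ q hq; cases hq
  | cons b t ih =>
    intro h q hq
    rw [List.Chain, List.isChain_cons_cons] at h
    rcases List.mem_cons.1 hq with hq | hq
    · exact hq ▸ h.1.2
    · exact ih h.2 q hq

/-- The discrete Sierpinski triangle is 4-connected: every point of `S_△` is
joined to `(0,0)` by a finite path of 4-adjacent points of `S_△`. -/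
theorem sierpinski_fourConnected (p : ℕ × ℕ) (hp : p ∈ sierpinski) :
    ∃ l : List (ℕ × ℕ), l.head? = some (0, 0) ∧ l.getLast? = some p ∧
      (∀ q ∈ l, q ∈ sierpinski) ∧ l.Chain' FourAdj := by
  obtain ⟨_, ⟨i, rfl⟩, hpi⟩ := hp
  have hc : Conn sierpinski (0, 0) p :=
    (stage_conn i p hpi).mono (Set.subset_iUnion sierpStage i)
  obtain ⟨l, hchain, hlast⟩ := List.exists_isChain_cons_of_relationReflTransGen hc
  refine ⟨(0, 0) :: l, rfl, ?_, ?_, ?_⟩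
  · rw [List.getLast?_eq_getLast (List.cons_ne_nil _ _), hlast]
  · intro q hq
    rcases List.mem_cons.1 hq with hq | hq
    · exact Set.mem_iUnion.2 ⟨0, by rw [hq]; rfl⟩
    · exact chain_mem hchain q hq
  · exact hchain.imp fun _ _ h => h.1
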